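/- Let k, g be natural numbers with 2 ≤ g ≤ k. Then C(k,g) + (g−2)·C(k−1, g−1) ≤ C(k,g)·(g−1); that is, the number of row additions performed by the optimized algorithm, Σ_{j=g−1}^{k−1} C(j−1, g−2)·(g−2+k−j), is at most the number C(k,g)·(g−1) performed by the basic algorithm. -/
import Mathlib

lemma aux_sum_choose_mul (m c : ℕ) :
    ∑ i ∈ Finset.Icc m (m + c), i.choose m * (m + c + 1 - i)
      = (m + c + 2).choose (m + 2) := by
  induction c with
  | zero => simp
  | succ c ih =>
    have h1 : Finset.Icc m (m + c + 1) = Finset.Ico m (m + c + 2) :=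
      (Finset.Ico_add_one_right_eq_Icc m (m + c + 1)).symm
    have h2 : Finset.Icc m (m + c) = Finset.Ico m (m + c + 1) :=
      (Finset.Ico_add_one_right_eq_Icc m (m + c)).symm
    have key : ∑ i ∈ Finset.Icc m (m + (c+1)), i.choose m * (m + (c+1) + 1 - i)
        = (∑ i ∈ Finset.Icc m (m + c), i.choose m * (m + c + 1 - i))
          + (∑ i ∈ Finset.Icc m (m + c), i.choose m)
          + (m + c + 1).choose m := by
      have : m + (c+1) = m + c + 1 := by ring
      rw [this, h1, Finset.sum_Ico_succ_top (by omega), ← h2]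
      have hsplit : ∑ i ∈ Finset.Icc m (m + c), i.choose m * (m + c + 1 + 1 - i)
          = (∑ i ∈ Finset.Icc m (m + c), i.choose m * (m + c + 1 - i))
            + (∑ i ∈ Finset.Icc m (m + c), i.choose m) := by
        rw [← Finset.sum_add_distrib]
        apply Finset.sum_congr rfl
        intro i hi
        rw [Finset.mem_Icc] at hi
        have : m + c + 1 + 1 - i = (m + c + 1 - i) + 1 := by omega
        rw [this, Nat.mul_add, Nat.mul_one]
      rw [hsplit]
      have : m + c + 1 + 1 - (m + c + 1) = 1 := by omega
      rw [this, Nat.mul_one]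
    rw [key, ih, Nat.sum_Icc_choose]
    have h3 : (∑ i ∈ Finset.Icc m (m + c + 1), i.choose m)
        = (∑ i ∈ Finset.Icc m (m + c), i.choose m) + (m + c + 1).choose m := by
      rw [h1, Finset.sum_Ico_succ_top (by omega), ← h2]
    have h4 := Nat.sum_Icc_choose (m + c + 1) m
    rw [h3, Nat.sum_Icc_choose] at h4
    have : m + (c + 1) + 2 = (m + c + 2) + 1 := by ring
    rw [this, Nat.choose_succ_succ' (m + c + 2) (m + 1)]
    have h4' : (m + c + 1).choose (m + 1) + (m + c + 1).choose m
        = (m + c + 2).choose (m + 1) := h4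
    rw [show m + 1 + 1 = m + 2 from rfl]
    omega

/-- The optimized algorithm performs no more row additions than the basic
algorithm: `C(k,g) + (g-2)·C(k-1,g-1) ≤ C(k,g)·(g-1)`, that is,
`Σ_{j=g-1}^{k-1} C(j-1, g-2)·(g-2+k-j) ≤ C(k,g)·(g-1)`. -/
theorem optimized_le_basic (k g : ℕ) (hg : 2 ≤ g) (hgk : g ≤ k) :
    k.choose g + (g - 2) * (k - 1).choose (g - 1) ≤ k.choose g * (g - 1) ∧
    (∑ j ∈ Finset.Icc (g - 1) (k - 1),
        (j - 1).choose (g - 2) * (g - 2 + (k - j)))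
      ≤ k.choose g * (g - 1) := by
  obtain ⟨m, rfl⟩ : ∃ m, g = m + 2 := ⟨g - 2, by omega⟩
  obtain ⟨c, rfl⟩ : ∃ c, k = m + 2 + c := ⟨k - (m + 2), by omega⟩
  have e1 : m + 2 - 2 = m := by omega
  have e2 : m + 2 - 1 = m + 1 := by omega
  have e3 : m + 2 + c - 1 = m + c + 1 := by omega
  -- key: C(k-1, g-1) ≤ C(k, g)
  have hle : (m + c + 1).choose (m + 1) ≤ (m + 2 + c).choose (m + 2) := by
    have : m + 2 + c = (m + c + 1) + 1 := by ring
    rw [this, Nat.choose_succ_succ' (m + c + 1) (m + 1)]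
    omega
  constructor
  · rw [e1, e2, e3]
    calc (m + 2 + c).choose (m + 2) + m * (m + c + 1).choose (m + 1)
        ≤ (m + 2 + c).choose (m + 2) + m * (m + 2 + c).choose (m + 2) := by
          gcongr
      _ = (m + 2 + c).choose (m + 2) * (m + 2 - 1) := by rw [e2]; ring
  · rw [e1, e2, e3]
    -- reindex the sum
    have hre : (∑ j ∈ Finset.Icc (m + 1) (m + c + 1),
          (j - 1).choose m * (m + (m + 2 + c - j)))
        = ∑ i ∈ Finset.Icc m (m + c), i.choose m * (m + (m + c + 1 - i)) := by
      rw [show Finset.Icc (m+1) (m+c+1) = (Finset.Icc m (m+c)).map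
            (addRightEmbedding 1) by rw [Finset.map_add_right_Icc],
        Finset.sum_map]
      apply Finset.sum_congr rfl
      intro i hi
      rw [Finset.mem_Icc] at hi
      simp only [addRightEmbedding_apply]
      rw [show i + 1 - 1 = i from rfl,
        show m + (m + 2 + c - (i + 1)) = m + (m + c + 1 - i) by omega]
    rw [hre]
    have hsplit : (∑ i ∈ Finset.Icc m (m + c), i.choose m * (m + (m + c + 1 - i)))
        = m * (∑ i ∈ Finset.Icc m (m + c), i.choose m)
          + ∑ i ∈ Finset.Icc m (m + c), i.choose m * (m + c + 1 - i) := by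
      rw [Finset.mul_sum, ← Finset.sum_add_distrib]
      apply Finset.sum_congr rfl
      intro i hi
      ring
    rw [hsplit, Nat.sum_Icc_choose, aux_sum_choose_mul]
    calc m * (m + c + 1).choose (m + 1) + (m + c + 2).choose (m + 2)
        ≤ m * (m + 2 + c).choose (m + 2) + (m + c + 2).choose (m + 2) := by gcongr
      _ = (m + 2 + c).choose (m + 2) * (m + 2 - 1) := by
          rw [show m + c + 2 = m + 2 + c by ring, e2]; ring
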